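/- Let 1 < α < 2 and β > 0, let φ be an analytic self-map of the open unit disk D, and let g be analytic on D. Then the operator C_φU_g, defined by (C_φU_g f)(z) = ∫₀^{φ(z)} f(ξ) g'(ξ) dξ, is bounded from Z^α to Z^β if and only if (g'∘φ)·φ'' + (g''∘φ)·(φ')² ∈ H_{v_β}^∞ and sup_{z∈D} (1−|z|²)^β |g'(φ(z))(φ'(z))²| / (1−|φ(z)|²)^{α−1} < ∞. -/

import Mathlib

noncomputable section

/-- The open unit disk in the complex plane. -/
def uD : Set ℂ := Metric.ball 0 1

/-- The Zygmund-type quantity `(1-|z|^2)^a * |f''(z)|`. -/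
def zygS (a : ℝ) (f : ℂ → ℂ) (z : ℂ) : ℝ := (1 - ‖z‖ ^ 2) ^ a * ‖deriv (deriv f) z‖

/-- Membership in the Zygmund-type space `Z^a`. -/
def memZ (a : ℝ) (f : ℂ → ℂ) : Prop :=
  AnalyticOn ℂ f uD ∧ ∃ M : ℝ, ∀ z ∈ uD, zygS a f z ≤ M

/-- The Zygmund-type norm `‖f‖_{Z^a} = |f 0| + |f' 0| + sup_{z ∈ D} (1-|z|^2)^a |f''(z)|`. -/
def zNorm (a : ℝ) (f : ℂ → ℂ) : ℝ := ‖f 0‖ + ‖deriv f 0‖ + sSup (zygS a f '' uD)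

/-- Membership in the weighted space `H^∞_{v_b}` (for `u` analytic on `uD`). -/
def memHv (b : ℝ) (u : ℂ → ℂ) : Prop :=
  ∃ M : ℝ, ∀ z ∈ uD, (1 - ‖z‖ ^ 2) ^ b * ‖u z‖ ≤ M

/-- `T` is a bounded operator from `Z^a` to `Z^b`. -/
def boundedOp (a b : ℝ) (T : (ℂ → ℂ) → ℂ → ℂ) : Prop :=
  (∀ f, memZ a f → memZ b (T f)) ∧
    ∃ C > 0, ∀ f, memZ a f → zNorm b (T f) ≤ C * zNorm a f

/-- `(C_φ U_g f)(z) = ∫₀^{φ(z)} f(ξ) g'(ξ) dξ`, parametrized along the segment from `0` to `φ z`. -/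
def CphiUg (g φ : ℂ → ℂ) (f : ℂ → ℂ) : ℂ → ℂ :=
  fun z => ∫ t in (0:ℝ)..1, φ z * (f ((t : ℂ) * φ z) * deriv g ((t : ℂ) * φ z))

open Complex Metric Set intervalIntegral MeasureTheory Filter

lemma uD_open : IsOpen uD := Metric.isOpen_ball

lemma mem_uD {z : ℂ} : z ∈ uD ↔ ‖z‖ < 1 := by
  simp [uD, Metric.mem_ball, dist_zero_right]

lemma zero_mem_uD : (0:ℂ) ∈ uD := by simp [mem_uD]

lemma smul_mem_uD {w : ℂ} (hw : w ∈ uD) {t : ℝ} (h0 : 0 ≤ t) (h1 : t ≤ 1) :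
    (t:ℂ) * w ∈ uD := by
  rw [mem_uD] at *
  have : ‖(t:ℂ) * w‖ = t * ‖w‖ := by
    rw [norm_mul, Complex.norm_real, Real.norm_of_nonneg h0]
  rw [this]
  nlinarith [norm_nonneg w]

lemma analyticOnNhd_of (f : ℂ → ℂ) (hf : AnalyticOn ℂ f uD) : AnalyticOnNhd ℂ f uD :=
  (uD_open.analyticOn_iff_analyticOnNhd).mp hf

lemma hasDerivAt_primitive {G : ℂ → ℂ} (hG : AnalyticOnNhd ℂ G uD) {w : ℂ} (hw : w ∈ uD) :
    HasDerivAt (fun x : ℂ => ∫ t in (0:ℝ)..1, x * G ((t:ℂ) * x)) (G w) w := by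
  have hw1 : ‖w‖ < 1 := mem_uD.mp hw
  set r : ℝ := (1 + ‖w‖)/2 with hr
  set ε : ℝ := (1 - ‖w‖)/2 with he
  have hε : 0 < ε := by simp only [he]; linarith
  have hr1 : r < 1 := by simp only [hr]; linarith
  have hr0 : 0 < r := by simp only [hr]; positivity
  have hball : ∀ x ∈ ball w ε, ‖x‖ ≤ r := by
    intro x hx
    have := mem_ball_iff_norm.mp hx
    calc ‖x‖ = ‖w + (x - w)‖ := by ring_nf
    _ ≤ ‖w‖ + ‖x - w‖ := norm_add_le _ _
    _ ≤ r := by have h2 := norm_sub_rev x w; simp only [hr]; linarith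
  have hsub : closedBall (0:ℂ) r ⊆ uD := by
    intro u hu
    rw [mem_uD]
    calc ‖u‖ ≤ r := by simpa [dist_zero_right] using (mem_closedBall.mp hu)
    _ < 1 := hr1
  have hmemc : ∀ x : ℂ, ‖x‖ ≤ r → ∀ t : ℝ, 0 ≤ t → t ≤ 1 → ((t:ℂ) * x) ∈ closedBall (0:ℂ) r := by
    intro x hx t h0 h1
    simp only [mem_closedBall, dist_zero_right, norm_mul, Complex.norm_real,
      Real.norm_of_nonneg h0]
    nlinarith [norm_nonneg x]
  have hGc : ContinuousOn G uD := hG.continuousOn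
  have hG'a : AnalyticOnNhd ℂ (deriv G) uD := hG.deriv
  have hG'c : ContinuousOn (deriv G) uD := hG'a.continuousOn
  obtain ⟨K, hK⟩ := (isCompact_closedBall (0:ℂ) r).exists_bound_of_continuousOn (hGc.mono hsub)
  obtain ⟨K', hK'⟩ := (isCompact_closedBall (0:ℂ) r).exists_bound_of_continuousOn (hG'c.mono hsub)
  have hK0 : 0 ≤ K := le_trans (norm_nonneg _) (hK 0 (by simp [hr0.le]))
  have hK'0 : 0 ≤ K' := le_trans (norm_nonneg _) (hK' 0 (by simp [hr0.le]))
  -- continuity of integrands in t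
  have hcont : ∀ x : ℂ, ‖x‖ ≤ r → ContinuousOn (fun t : ℝ => x * G ((t:ℂ) * x)) (Icc 0 1) := by
    intro x hx
    apply continuousOn_const.mul
    apply (hGc.comp (by fun_prop) _)
    intro t ht
    exact hsub (hmemc x hx t ht.1 ht.2)
  have hwr : ‖w‖ ≤ r := by simp only [hr]; linarith
  have hcont' : ContinuousOn
      (fun t : ℝ => G ((t:ℂ) * w) + (t:ℂ) * w * deriv G ((t:ℂ) * w)) (Icc 0 1) := by
    have hmaps : ∀ t ∈ Icc (0:ℝ) 1, ((t:ℂ) * w) ∈ uD := fun t ht =>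
      hsub (hmemc w hwr t ht.1 ht.2)
    exact ((hGc.comp (by fun_prop) hmaps).add
      ((by fun_prop : ContinuousOn (fun t : ℝ => (t:ℂ) * w) (Icc 0 1)).mul
        (hG'c.comp (by fun_prop) hmaps)))
  have main := intervalIntegral.hasDerivAt_integral_of_dominated_loc_of_deriv_le
    (F := fun (x : ℂ) (t : ℝ) => x * G ((t:ℂ) * x))
    (F' := fun (x : ℂ) (t : ℝ) => G ((t:ℂ) * x) + (t:ℂ) * x * deriv G ((t:ℂ) * x))
    (x₀ := w) (a := 0) (b := 1) (bound := fun _ => K + K') (μ := volume) (ball_mem_nhds w hε)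
    ?_ ?_ ?_ ?_ ?_ ?_
  · -- conclusion: rewrite the integral of F' w
    have h2 := main.2
    have hval : (∫ t in (0:ℝ)..1, (G ((t:ℂ) * w) + (t:ℂ) * w * deriv G ((t:ℂ) * w))) = G w := by
      have key : ∀ t ∈ uIcc (0:ℝ) 1, HasDerivAt (fun s : ℝ => (s:ℂ) * G ((s:ℂ) * w))
          (G ((t:ℂ) * w) + (t:ℂ) * w * deriv G ((t:ℂ) * w)) t := by
        intro t ht
        rw [uIcc_of_le zero_le_one] at ht
        have htw : ((t:ℂ) * w) ∈ uD := hsub (hmemc w hwr t ht.1 ht.2)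
        have hGd : HasDerivAt G (deriv G ((t:ℂ)*w)) ((t:ℂ)*w) :=
          ((hG _ htw).differentiableAt).hasDerivAt
        have hin : HasDerivAt (fun y : ℂ => y * w) w (t:ℂ) := hasDerivAt_mul_const w
        have hcomp := HasDerivAt.comp (t:ℂ) hGd hin
        have hprod := (hasDerivAt_id (t:ℂ)).mul hcomp
        have := hprod.comp_ofReal
        refine this.congr_deriv ?_
        simp only [id_eq, Function.comp]
        ring
      have hint : IntervalIntegrable
          (fun t : ℝ => G ((t:ℂ) * w) + (t:ℂ) * w * deriv G ((t:ℂ) * w)) volume 0 1 := by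
        apply ContinuousOn.intervalIntegrable
        rwa [uIcc_of_le zero_le_one]
      have := intervalIntegral.integral_eq_sub_of_hasDerivAt key hint
      simpa using this
    rwa [hval] at h2
  · -- measurability of F x eventually
    filter_upwards [ball_mem_nhds w hε] with x hx
    exact ((hcont x (hball x hx)).mono (by rw [uIoc_of_le zero_le_one]; exact Ioc_subset_Icc_self)).aestronglyMeasurable measurableSet_uIoc
  · -- integrability of F w
    apply ContinuousOn.intervalIntegrable
    rw [uIcc_of_le zero_le_one]
    exact hcont w hwr
  · -- measurability of F' w
    exact (hcont'.mono (by rw [uIoc_of_le zero_le_one]; exact Ioc_subset_Icc_self)).aestronglyMeasurable measurableSet_uIoc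
  · -- bound
    apply ae_of_all
    intro t ht x hx
    rw [uIoc_of_le zero_le_one] at ht
    have h0t : 0 ≤ t := ht.1.le
    have h1t : t ≤ 1 := ht.2
    have hxr := hball x hx
    have htx : ((t:ℂ) * x) ∈ closedBall (0:ℂ) r := hmemc x hxr t h0t h1t
    have hn : ‖(t:ℂ) * x‖ ≤ 1 := by
      simpa [dist_zero_right] using le_trans (mem_closedBall.mp htx) (by simpa [dist_zero_right] using hr1.le)
    calc ‖G ((t:ℂ) * x) + (t:ℂ) * x * deriv G ((t:ℂ) * x)‖
        ≤ ‖G ((t:ℂ) * x)‖ + ‖(t:ℂ) * x‖ * ‖deriv G ((t:ℂ) * x)‖ := by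
          refine le_trans (norm_add_le _ _) (by rw [norm_mul])
      _ ≤ K + K' := by
          have h1 := hK _ htx
          have h2 := hK' _ htx
          have h3 := norm_nonneg ((t:ℂ) * x)
          have h4 := norm_nonneg (deriv G ((t:ℂ) * x))
          nlinarith
  · exact intervalIntegrable_const
  · -- differentiability
    apply ae_of_all
    intro t ht x hx
    rw [uIoc_of_le zero_le_one] at ht
    have htx : ((t:ℂ) * x) ∈ uD := hsub (hmemc x (hball x hx) t ht.1.le ht.2)
    have hGd : HasDerivAt G (deriv G ((t:ℂ)*x)) ((t:ℂ)*x) := ((hG _ htx).differentiableAt).hasDerivAt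
    have hin : HasDerivAt (fun y : ℂ => (t:ℂ) * y) (t:ℂ) x := by
      simpa using (hasDerivAt_id x).const_mul (t:ℂ)
    have hcomp := HasDerivAt.comp x hGd hin
    have hprod := (hasDerivAt_id x).mul hcomp
    refine hprod.congr_deriv ?_
    simp only [id_eq, Function.comp]
    ring

lemma T_analytic {φ g f : ℂ → ℂ} (hφ : AnalyticOnNhd ℂ φ uD) (hφm : Set.MapsTo φ uD uD)
    (hg : AnalyticOnNhd ℂ g uD) (hf : AnalyticOnNhd ℂ f uD) :
    AnalyticOnNhd ℂ (CphiUg g φ f) uD ∧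
    (∀ z ∈ uD, deriv (CphiUg g φ f) z = f (φ z) * deriv g (φ z) * deriv φ z) ∧
    (∀ z ∈ uD, deriv (deriv (CphiUg g φ f)) z =
      deriv f (φ z) * (deriv g (φ z) * (deriv φ z)^2)
      + f (φ z) * (deriv g (φ z) * deriv (deriv φ) z + deriv (deriv g) (φ z) * (deriv φ z)^2)) := by
  set G : ℂ → ℂ := fun u => f u * deriv g u with hGdef
  have hGa : AnalyticOnNhd ℂ G uD := hf.mul hg.deriv
  have hD1 : ∀ z ∈ uD, HasDerivAt (CphiUg g φ f) (G (φ z) * deriv φ z) z := by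
    intro z hz
    have hφd : HasDerivAt φ (deriv φ z) z := (hφ z hz).differentiableAt.hasDerivAt
    exact (HasDerivAt.comp z (hasDerivAt_primitive hGa (hφm hz)) hφd : _)
  have hana : AnalyticOnNhd ℂ (CphiUg g φ f) uD := by
    apply DifferentiableOn.analyticOnNhd _ uD_open
    exact fun z hz => ((hD1 z hz).differentiableAt).differentiableWithinAt
  refine ⟨hana, fun z hz => (hD1 z hz).deriv, ?_⟩
  intro z hz
  have hev : deriv (CphiUg g φ f) =ᶠ[nhds z] fun x => G (φ x) * deriv φ x := by
    filter_upwards [uD_open.mem_nhds hz] with x hx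
    exact (hD1 x hx).deriv
  rw [hev.deriv_eq]
  have hφd : HasDerivAt φ (deriv φ z) z := (hφ z hz).differentiableAt.hasDerivAt
  have hGd : HasDerivAt G (deriv f (φ z) * deriv g (φ z) + f (φ z) * deriv (deriv g) (φ z))
      (φ z) :=
    ((hf _ (hφm hz)).differentiableAt.hasDerivAt).mul
      ((hg.deriv _ (hφm hz)).differentiableAt.hasDerivAt)
  have hcomp := HasDerivAt.comp z hGd hφd
  have hφ'' : HasDerivAt (deriv φ) (deriv (deriv φ) z) z :=
    (hφ.deriv z hz).differentiableAt.hasDerivAt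
  have hprod := hcomp.mul hφ''
  rw [show (fun x => G (φ x) * deriv φ x) = (G ∘ φ) * deriv φ from rfl,
    hprod.deriv]
  simp only [Function.comp, hGdef]
  ring

lemma uD_pos {z : ℂ} (hz : z ∈ uD) : 0 < 1 - ‖z‖^2 := by
  have := mem_uD.mp hz
  nlinarith [norm_nonneg z]

lemma zygS_nonneg {a : ℝ} {f : ℂ → ℂ} {z : ℂ} (hz : z ∈ uD) : 0 ≤ zygS a f z :=
  mul_nonneg (Real.rpow_nonneg (by nlinarith [uD_pos hz]) _) (norm_nonneg _)

/-- Pointwise bound on the second derivative from the Zygmund seminorm. -/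
lemma second_deriv_bound {α : ℝ} {f : ℂ → ℂ} {S : ℝ} (hα : 0 < α)
    (hS : ∀ z ∈ uD, zygS α f z ≤ S) {u : ℂ} (hu : u ∈ uD) :
    ‖deriv (deriv f) u‖ ≤ S * (1 - ‖u‖) ^ (-α) := by
  have hu1 : ‖u‖ < 1 := mem_uD.mp hu
  have hp1 : 0 < 1 - ‖u‖ := by linarith
  have hp2 : 0 < 1 - ‖u‖^2 := uD_pos hu
  have hle : 1 - ‖u‖ ≤ 1 - ‖u‖^2 := by nlinarith [norm_nonneg u]
  have h0 : S ≥ 0 := le_trans (zygS_nonneg hu) (hS u hu)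
  have h1 : ‖deriv (deriv f) u‖ ≤ S * (1 - ‖u‖^2) ^ (-α) := by
    have hz := hS u hu
    unfold zygS at hz
    have hpow : (0:ℝ) < (1 - ‖u‖^2) ^ α := Real.rpow_pos_of_pos hp2 α
    rw [Real.rpow_neg hp2.le]
    calc ‖deriv (deriv f) u‖ = ((1 - ‖u‖^2) ^ α * ‖deriv (deriv f) u‖) * ((1 - ‖u‖^2) ^ α)⁻¹ := by
          rw [mul_comm ((1 - ‖u‖^2) ^ α), mul_assoc, mul_inv_cancel₀ hpow.ne', mul_one]
      _ ≤ S * ((1 - ‖u‖^2) ^ α)⁻¹ := by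
          apply mul_le_mul_of_nonneg_right hz (by positivity)
  refine le_trans h1 ?_
  exact mul_le_mul_of_nonneg_left
    (Real.rpow_le_rpow_of_nonpos hp1 hle (by linarith)) h0

/-- FTC along the segment from 0 to w : `f w - f 0 = ∫₀¹ w·f'(tw) dt` for `f` analytic. -/
lemma ftc_ray {f : ℂ → ℂ} (hf : AnalyticOnNhd ℂ f uD) {w : ℂ} (hw : w ∈ uD) :
    f w - f 0 = ∫ t in (0:ℝ)..1, w * deriv f ((t:ℂ) * w) := by
  have key : ∀ t ∈ uIcc (0:ℝ) 1, HasDerivAt (fun s : ℝ => f ((s:ℂ) * w))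
      (w * deriv f ((t:ℂ) * w)) t := by
    intro t ht
    rw [uIcc_of_le zero_le_one] at ht
    have htw : ((t:ℂ) * w) ∈ uD := smul_mem_uD hw ht.1 ht.2
    have hfd : HasDerivAt f (deriv f ((t:ℂ)*w)) ((t:ℂ)*w) := (hf _ htw).differentiableAt.hasDerivAt
    have hin : HasDerivAt (fun y : ℂ => y * w) w (t:ℂ) := hasDerivAt_mul_const w
    have := (HasDerivAt.comp (t:ℂ) hfd hin).comp_ofReal
    convert this using 1
    · ext s; simp [Function.comp, mul_comm]
    · ring
  have hint : IntervalIntegrable (fun t : ℝ => w * deriv f ((t:ℂ) * w)) volume 0 1 := by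
    apply ContinuousOn.intervalIntegrable
    rw [uIcc_of_le zero_le_one]
    apply continuousOn_const.mul
    apply (hf.deriv.continuousOn.comp (by fun_prop) _)
    intro t ht
    exact smul_mem_uD hw ht.1 ht.2
  have := intervalIntegral.integral_eq_sub_of_hasDerivAt key hint
  simp only [Complex.ofReal_one, Complex.ofReal_zero, one_mul, zero_mul] at this
  rw [this]

/-- The elementary integral `∫₀¹ r (1-t r)^(p-1) dt = ((1-r)^p - 1)/(-p)` style computation:
here stated as: for `0 < r < 1` and `p ≠ 0`,
`∫ t in 0..1, r * (1-t*r)^(p-1) = (1 - (1-r)^p)/p`. -/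
lemma integral_ray_pow {r p : ℝ} (hr0 : 0 < r) (hr1 : r < 1) (hp : p ≠ 0) :
    ∫ t in (0:ℝ)..1, r * (1 - t*r) ^ (p - 1) = (1 - (1-r)^p)/p := by
  have hpos : ∀ t ∈ uIcc (0:ℝ) 1, 0 < 1 - t * r := by
    intro t ht
    rw [uIcc_of_le zero_le_one] at ht
    nlinarith [ht.1, ht.2]
  have key : ∀ t ∈ uIcc (0:ℝ) 1, HasDerivAt (fun t : ℝ => -(1 - t*r)^p / p)
      (r * (1 - t*r) ^ (p - 1)) t := by
    intro t ht
    have h1 : HasDerivAt (fun t : ℝ => 1 - t*r) (-r) t := by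
      simpa using (hasDerivAt_mul_const r).const_sub 1
    have h2 : HasDerivAt (fun x : ℝ => x ^ p) (p * (1 - t*r) ^ (p-1)) (1 - t*r) :=
      Real.hasDerivAt_rpow_const (Or.inl (hpos t ht).ne')
    have h3 := (HasDerivAt.comp t h2 h1).neg.div_const p
    refine h3.congr_deriv ?_
    rw [div_eq_iff hp]
    ring
  have hint : IntervalIntegrable (fun t : ℝ => r * (1 - t*r) ^ (p - 1)) volume 0 1 := by
    apply ContinuousOn.intervalIntegrable
    apply continuousOn_const.mul
    apply ContinuousOn.rpow_const (by fun_prop)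
    intro t ht
    exact Or.inl (hpos t ht).ne'
  have := intervalIntegral.integral_eq_sub_of_hasDerivAt key hint
  rw [this]
  have h1 : (1:ℝ) - 1 * r = 1 - r := by ring
  have h0 : (1:ℝ) - 0 * r = 1 := by ring
  rw [h1, h0, Real.one_rpow]
  ring

lemma rpow_one_sub_le {r α : ℝ} (hr0 : 0 ≤ r) (hr1 : r < 1) (hα1 : 1 < α) (hα2 : α < 2) :
    (1 - r) ^ (1-α) ≤ 2 * (1 - r^2) ^ (1-α) := by
  have h1 : (0:ℝ) < 1 - r := by linarith
  have h2 : (0:ℝ) < 1 + r := by linarith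
  have hfac : 1 - r^2 = (1-r) * (1+r) := by ring
  have hmul : (1 - r^2) ^ (1-α) = (1-r) ^ (1-α) * (1+r) ^ (1-α) := by
    rw [hfac, Real.mul_rpow h1.le h2.le]
  have hge : (2:ℝ) ^ (1-α) ≤ (1+r) ^ (1-α) :=
    Real.rpow_le_rpow_of_nonpos h2 (by linarith) (by linarith)
  have hge2 : (2:ℝ) ^ (-1:ℝ) ≤ (2:ℝ) ^ (1-α) := by
    apply Real.rpow_le_rpow_of_exponent_le one_le_two (by linarith)
  rw [Real.rpow_neg_one] at hge2
  have hpos : (0:ℝ) < (1-r) ^ (1-α) := Real.rpow_pos_of_pos h1 _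
  nlinarith [hmul, hge, hge2, hpos]

lemma deriv_growth {α : ℝ} (hα1 : 1 < α) (hα2 : α < 2) {f : ℂ → ℂ} {S : ℝ} (hf : AnalyticOnNhd ℂ f uD)
    (hS : ∀ z ∈ uD, zygS α f z ≤ S) {w : ℂ} (hw : w ∈ uD) :
    ‖deriv f w‖ ≤ (‖deriv f 0‖ + 2/(α-1) * S) * (1 - ‖w‖^2) ^ (1-α) := by
  have hS0 : 0 ≤ S := le_trans (zygS_nonneg zero_mem_uD) (hS 0 zero_mem_uD)
  have hα0 : (0:ℝ) < α - 1 := by linarith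
  have hp2 : 0 < 1 - ‖w‖^2 := uD_pos hw
  have h1le : (1:ℝ) ≤ (1 - ‖w‖^2) ^ (1-α) :=
    Real.one_le_rpow_of_pos_of_le_one_of_nonpos hp2 (by nlinarith [norm_nonneg w]) (by linarith)
  rcases eq_or_ne w 0 with rfl | hw0
  · have hmono := mul_le_mul_of_nonneg_left h1le
      (by positivity : (0:ℝ) ≤ ‖deriv f 0‖ + 2/(α-1) * S)
    have h9 : (0:ℝ) ≤ 2/(α-1) * S := mul_nonneg (by positivity) hS0
    nlinarith
  have hr0 : 0 < ‖w‖ := norm_pos_iff.mpr hw0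
  have hr1 : ‖w‖ < 1 := mem_uD.mp hw
  set r := ‖w‖ with hrdef
  have hexp : ((1:ℝ)-α) - 1 = -α := by ring
  have hbd : ‖deriv f w - deriv f 0‖ ≤ |∫ t in (0:ℝ)..1, S * (r * (1 - t*r) ^ ((1-α) - 1))| := by
    rw [ftc_ray hf.deriv hw]
    apply intervalIntegral.norm_integral_le_abs_of_norm_le
    · rw [MeasureTheory.ae_restrict_iff' measurableSet_uIoc]
      apply ae_of_all
      intro t ht
      rw [uIoc_of_le zero_le_one] at ht
      have htw : ((t:ℂ) * w) ∈ uD := smul_mem_uD hw ht.1.le ht.2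
      have hnt : ‖(t:ℂ) * w‖ = t * r := by
        rw [norm_mul, Complex.norm_real, Real.norm_of_nonneg ht.1.le]
      have h2 := second_deriv_bound (by linarith : (0:ℝ) < α) hS htw
      rw [hnt] at h2
      rw [norm_mul, hexp]
      calc r * ‖deriv (deriv f) ((t:ℂ)*w)‖ ≤ r * (S * (1 - t*r) ^ (-α)) :=
            mul_le_mul_of_nonneg_left h2 hr0.le
        _ = S * (r * (1 - t*r) ^ (-α)) := by ring
    · apply IntervalIntegrable.const_mul
      apply ContinuousOn.intervalIntegrable
      apply continuousOn_const.mul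
      apply ContinuousOn.rpow_const (by fun_prop)
      intro t ht
      rw [uIcc_of_le zero_le_one] at ht
      have : (0:ℝ) < 1 - t*r := by nlinarith [ht.1, ht.2]
      exact Or.inl this.ne'
  have hval : (∫ t in (0:ℝ)..1, S * (r * (1 - t*r) ^ ((1-α) - 1)))
      = S * ((1 - (1-r)^(1-α))/(1-α)) := by
    rw [intervalIntegral.integral_const_mul, integral_ray_pow hr0 hr1 (by linarith : (1:ℝ)-α ≠ 0)]
  have hone_le : (1:ℝ) ≤ (1-r)^(1-α) :=
    Real.one_le_rpow_of_pos_of_le_one_of_nonpos (by linarith) (by linarith) (by linarith)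
  have hEnn : 0 ≤ S * ((1 - (1-r)^(1-α))/(1-α)) := by
    apply mul_nonneg hS0
    exact div_nonneg_of_nonpos (by linarith) (by linarith)
  rw [hval, _root_.abs_of_nonneg hEnn] at hbd
  have htri : ‖deriv f w‖ ≤ ‖deriv f 0‖ + ‖deriv f w - deriv f 0‖ := by
    have := norm_sub_norm_le (deriv f w) (deriv f 0)
    linarith [norm_sub_norm_le (deriv f w) (deriv f 0)]
  have hkey : S * ((1 - (1-r)^(1-α))/(1-α)) ≤ S/(α-1) * (1-r)^(1-α) := by
    have hrw : (1 - (1-r)^(1-α))/(1-α) = ((1-r)^(1-α) - 1)/(α-1) := by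
      rw [show (1:ℝ) - (1-r)^(1-α) = -((1-r)^(1-α) - 1) by ring,
        show (1:ℝ)-α = -(α-1) by ring, neg_div_neg_eq]
    rw [hrw]
    have hstep : ((1-r)^(1-α) - 1)/(α-1) ≤ ((1-r)^(1-α))/(α-1) := by
      gcongr
      linarith
    calc S * (((1-r)^(1-α) - 1)/(α-1)) ≤ S * (((1-r)^(1-α))/(α-1)) :=
          mul_le_mul_of_nonneg_left hstep hS0
      _ = S/(α-1) * (1-r)^(1-α) := by ring
  have h2r : (1-r)^(1-α) ≤ 2 * (1-r^2)^(1-α) := rpow_one_sub_le hr0.le hr1 hα1 hα2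
  have hfin : S/(α-1) * (1-r)^(1-α) ≤ 2/(α-1) * S * (1-r^2)^(1-α) := by
    have h3 : 0 ≤ S/(α-1) := by positivity
    calc S/(α-1) * (1-r)^(1-α) ≤ S/(α-1) * (2 * (1-r^2)^(1-α)) :=
          mul_le_mul_of_nonneg_left h2r h3
      _ = 2/(α-1) * S * (1-r^2)^(1-α) := by ring
  have := le_trans hbd (le_trans hkey hfin)
  have hd0 : ‖deriv f 0‖ ≤ ‖deriv f 0‖ * (1-r^2)^(1-α) := by
    nlinarith [norm_nonneg (deriv f 0)]
  nlinarith [htri]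

lemma value_growth {α : ℝ} (hα1 : 1 < α) (hα2 : α < 2) {f : ℂ → ℂ} {S : ℝ}
    (hf : AnalyticOnNhd ℂ f uD) (hS : ∀ z ∈ uD, zygS α f z ≤ S) {w : ℂ} (hw : w ∈ uD) :
    ‖f w‖ ≤ ‖f 0‖ + (‖deriv f 0‖ + 2/(α-1) * S)/(2-α) := by
  have hS0 : 0 ≤ S := le_trans (zygS_nonneg zero_mem_uD) (hS 0 zero_mem_uD)
  have hα0 : (0:ℝ) < α - 1 := by linarith
  have h2α : (0:ℝ) < 2 - α := by linarith
  set D := ‖deriv f 0‖ + 2/(α-1) * S with hD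
  have hD0 : 0 ≤ D := by positivity
  rcases eq_or_ne w 0 with rfl | hw0
  · have : 0 ≤ D/(2-α) := by positivity
    linarith
  have hr0 : 0 < ‖w‖ := norm_pos_iff.mpr hw0
  have hr1 : ‖w‖ < 1 := mem_uD.mp hw
  set r := ‖w‖ with hrdef
  have hderiv : ∀ t : ℝ, 0 ≤ t → t ≤ 1 → ‖deriv f ((t:ℂ)*w)‖ ≤ D * (1 - t*r)^(1-α) := by
    intro t h0 h1
    have htw : ((t:ℂ) * w) ∈ uD := smul_mem_uD hw h0 h1
    have hnt : ‖(t:ℂ) * w‖ = t * r := by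
      rw [norm_mul, Complex.norm_real, Real.norm_of_nonneg h0]
    have h2 := deriv_growth hα1 hα2 hf hS htw
    rw [hnt] at h2
    refine le_trans h2 ?_
    apply mul_le_mul_of_nonneg_left _ hD0
    have htr0 : 0 ≤ t*r := mul_nonneg h0 hr0.le
    have htr1 : t*r ≤ 1 := by nlinarith
    have hsq : (t*r)^2 ≤ t*r := by nlinarith [mul_nonneg htr0 (sub_nonneg.mpr htr1)]
    apply Real.rpow_le_rpow_of_nonpos (by nlinarith) (by nlinarith) (by linarith)
  have hbd : ‖f w - f 0‖ ≤ |∫ t in (0:ℝ)..1, D * (r * (1 - t*r) ^ ((2-α) - 1))| := by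
    rw [ftc_ray hf hw]
    apply intervalIntegral.norm_integral_le_abs_of_norm_le
    · rw [MeasureTheory.ae_restrict_iff' measurableSet_uIoc]
      apply ae_of_all
      intro t ht
      rw [uIoc_of_le zero_le_one] at ht
      rw [norm_mul]
      have hexp : ((2:ℝ)-α) - 1 = 1-α := by ring
      rw [hexp]
      calc r * ‖deriv f ((t:ℂ)*w)‖ ≤ r * (D * (1 - t*r)^(1-α)) :=
            mul_le_mul_of_nonneg_left (hderiv t ht.1.le ht.2) hr0.le
        _ = D * (r * (1 - t*r) ^ (1-α)) := by ring
    · apply IntervalIntegrable.const_mul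
      apply ContinuousOn.intervalIntegrable
      apply continuousOn_const.mul
      apply ContinuousOn.rpow_const (by fun_prop)
      intro t ht
      rw [uIcc_of_le zero_le_one] at ht
      have : (0:ℝ) < 1 - t*r := by nlinarith [ht.1, ht.2]
      exact Or.inl this.ne'
  have hval : (∫ t in (0:ℝ)..1, D * (r * (1 - t*r) ^ ((2-α) - 1)))
      = D * ((1 - (1-r)^(2-α))/(2-α)) := by
    rw [intervalIntegral.integral_const_mul, integral_ray_pow hr0 hr1 (by linarith : (2:ℝ)-α ≠ 0)]
  have hposE : 0 ≤ D * ((1 - (1-r)^(2-α))/(2-α)) := by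
    apply mul_nonneg hD0
    apply div_nonneg _ h2α.le
    have : (1-r)^(2-α) ≤ 1 := Real.rpow_le_one (by linarith) (by linarith) (by linarith)
    linarith
  rw [hval, _root_.abs_of_nonneg hposE] at hbd
  have hE : D * ((1 - (1-r)^(2-α))/(2-α)) ≤ D/(2-α) := by
    have h1 : (1 - (1-r)^(2-α)) ≤ 1 := by
      nlinarith [Real.rpow_nonneg (by linarith : (0:ℝ) ≤ 1-r) (2-α)]
    have hstep : (1 - (1-r)^(2-α))/(2-α) ≤ 1/(2-α) := by gcongr
    calc D * ((1 - (1-r)^(2-α))/(2-α)) ≤ D * (1/(2-α)) :=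
          mul_le_mul_of_nonneg_left hstep hD0
      _ = D/(2-α) := by ring
  have htri := norm_sub_norm_le (f w) (f 0)
  linarith [le_trans hbd hE]

/-- `b_a(z) = 1 - conj a * z`. -/
def bfun (a : ℂ) : ℂ → ℂ := fun z => 1 - (starRingEnd ℂ) a * z

/-- Test functions `f_a(z) = (1-|a|²)² (1 - conj a z)^{-α}`. -/
def ftest (α : ℝ) (a : ℂ) : ℂ → ℂ :=
  fun z => (((1 - ‖a‖^2 : ℝ)) : ℂ)^2 * (bfun a z) ^ (-(α:ℂ))

lemma bfun_lb {a z : ℂ} (ha : ‖a‖ < 1) (hz : ‖z‖ < 1) : 0 < 1 - ‖a‖ * ‖z‖ := by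
  nlinarith [norm_nonneg a, norm_nonneg z]

lemma bfun_re {a z : ℂ} : 1 - ‖a‖ * ‖z‖ ≤ (bfun a z).re := by
  have h1 : ((starRingEnd ℂ) a * z).re ≤ ‖(starRingEnd ℂ) a * z‖ := by
    exact Complex.re_le_norm _
  have h2 : ‖(starRingEnd ℂ) a * z‖ = ‖a‖ * ‖z‖ := by
    rw [norm_mul, RCLike.norm_conj]
  simp only [bfun, Complex.sub_re, Complex.one_re]
  linarith [h2 ▸ h1]

lemma bfun_norm_ge {a z : ℂ} : 1 - ‖a‖ * ‖z‖ ≤ ‖bfun a z‖ := by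
  refine le_trans bfun_re ?_
  exact Complex.re_le_norm _

lemma bfun_slit {a z : ℂ} (ha : ‖a‖ < 1) (hz : ‖z‖ < 1) : bfun a z ∈ Complex.slitPlane :=
  Complex.mem_slitPlane_iff.mpr (Or.inl (lt_of_lt_of_le (bfun_lb ha hz) bfun_re))

lemma bfun_ne {a z : ℂ} (ha : ‖a‖ < 1) (hz : ‖z‖ < 1) : bfun a z ≠ 0 :=
  Complex.slitPlane_ne_zero (bfun_slit ha hz)

lemma bfun_norm_pos {a z : ℂ} (ha : ‖a‖ < 1) (hz : ‖z‖ < 1) : 0 < ‖bfun a z‖ :=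
  lt_of_lt_of_le (bfun_lb ha hz) bfun_norm_ge

lemma bfun_ge_z {a z : ℂ} (ha : ‖a‖ < 1) (hz : ‖z‖ < 1) : 1 - ‖z‖^2 ≤ 2 * ‖bfun a z‖ := by
  have h := bfun_norm_ge (a := a) (z := z)
  nlinarith [norm_nonneg a, norm_nonneg z]

lemma bfun_ge_a {a z : ℂ} (ha : ‖a‖ < 1) (hz : ‖z‖ < 1) : 1 - ‖a‖^2 ≤ 2 * ‖bfun a z‖ := by
  have h := bfun_norm_ge (a := a) (z := z)
  nlinarith [norm_nonneg a, norm_nonneg z]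

lemma bfun_hasDerivAt (a z : ℂ) : HasDerivAt (bfun a) (-((starRingEnd ℂ) a)) z := by
  show HasDerivAt (fun z => 1 - (starRingEnd ℂ) a * z) _ z
  simpa using (((hasDerivAt_id z).const_mul ((starRingEnd ℂ) a)).const_sub 1)

lemma ftest_hasDerivAt {α : ℝ} {a z : ℂ} (ha : ‖a‖ < 1) (hz : ‖z‖ < 1) :
    HasDerivAt (ftest α a)
      ((((1 - ‖a‖^2 : ℝ)) : ℂ)^2 *
        ((α:ℂ) * (starRingEnd ℂ) a * (bfun a z) ^ (-(α:ℂ)-1))) z := by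
  have h1 := (bfun_hasDerivAt a z).cpow_const (c := -(α:ℂ)) (bfun_slit ha hz)
  have h2 := h1.const_mul ((((1 - ‖a‖^2 : ℝ)) : ℂ)^2)
  refine h2.congr_deriv ?_
  ring

lemma d1_hasDerivAt {α : ℝ} {a z : ℂ} (ha : ‖a‖ < 1) (hz : ‖z‖ < 1) :
    HasDerivAt (fun z => (((1 - ‖a‖^2 : ℝ)) : ℂ)^2 *
        ((α:ℂ) * (starRingEnd ℂ) a * (bfun a z) ^ (-(α:ℂ)-1)))
      ((((1 - ‖a‖^2 : ℝ)) : ℂ)^2 *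
        ((α:ℂ) * ((α:ℂ)+1) * ((starRingEnd ℂ) a)^2 * (bfun a z) ^ (-(α:ℂ)-2))) z := by
  have h1 := (bfun_hasDerivAt a z).cpow_const (c := -(α:ℂ)-1) (bfun_slit ha hz)
  have he : (-(α:ℂ)-1) - 1 = -(α:ℂ)-2 := by ring
  rw [he] at h1
  have h2 := h1.const_mul ((((1 - ‖a‖^2 : ℝ)) : ℂ)^2 * ((α:ℂ) * (starRingEnd ℂ) a))
  refine (h2.congr_of_eventuallyEq (Filter.Eventually.of_forall fun x => ?_)).congr_deriv ?_
  · beta_reduce; ring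
  · ring

lemma ftest_deriv {α : ℝ} {a : ℂ} (ha : a ∈ uD) {z : ℂ} (hz : z ∈ uD) :
    deriv (ftest α a) z = (((1 - ‖a‖^2 : ℝ)) : ℂ)^2 *
      ((α:ℂ) * (starRingEnd ℂ) a * (bfun a z) ^ (-(α:ℂ)-1)) :=
  (ftest_hasDerivAt (mem_uD.mp ha) (mem_uD.mp hz)).deriv

lemma ftest_deriv2 {α : ℝ} {a : ℂ} (ha : a ∈ uD) {z : ℂ} (hz : z ∈ uD) :
    deriv (deriv (ftest α a)) z = (((1 - ‖a‖^2 : ℝ)) : ℂ)^2 *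
      ((α:ℂ) * ((α:ℂ)+1) * ((starRingEnd ℂ) a)^2 * (bfun a z) ^ (-(α:ℂ)-2)) := by
  have hev : deriv (ftest α a) =ᶠ[nhds z] fun x => (((1 - ‖a‖^2 : ℝ)) : ℂ)^2 *
      ((α:ℂ) * (starRingEnd ℂ) a * (bfun a x) ^ (-(α:ℂ)-1)) := by
    filter_upwards [uD_open.mem_nhds hz] with x hx
    exact ftest_deriv ha hx
  rw [hev.deriv_eq, (d1_hasDerivAt (mem_uD.mp ha) (mem_uD.mp hz)).deriv]

lemma ftest_analytic {α : ℝ} {a : ℂ} (ha : a ∈ uD) : AnalyticOnNhd ℂ (ftest α a) uD := by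
  apply DifferentiableOn.analyticOnNhd _ uD_open
  exact fun z hz =>
    ((ftest_hasDerivAt (mem_uD.mp ha) (mem_uD.mp hz)).differentiableAt).differentiableWithinAt

lemma norm_cpow_real (x : ℂ) (hx : x ≠ 0) (y : ℝ) : ‖x ^ ((y:ℝ):ℂ)‖ = ‖x‖ ^ y := by
  exact Complex.norm_cpow_real x y

lemma cast_neg_alpha (α : ℝ) : -(α:ℂ) = (((-α : ℝ)):ℂ) := by push_cast; ring
lemma cast_neg_alpha1 (α : ℝ) : -(α:ℂ)-1 = (((-α-1 : ℝ)):ℂ) := by push_cast; ring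
lemma cast_neg_alpha2 (α : ℝ) : -(α:ℂ)-2 = (((-α-2 : ℝ)):ℂ) := by push_cast; ring

lemma ftest_zygS {α : ℝ} (hα1 : 1 < α) (hα2 : α < 2) {a : ℂ} (ha : a ∈ uD) {z : ℂ}
    (hz : z ∈ uD) : zygS α (ftest α a) z ≤ 16 * (α * (α+1)) := by
  have ha1 : ‖a‖ < 1 := mem_uD.mp ha
  have hz1 : ‖z‖ < 1 := mem_uD.mp hz
  have hbpos : 0 < ‖bfun a z‖ := bfun_norm_pos ha1 hz1
  have hα0 : (0:ℝ) < α := by linarith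
  have hpz : 0 < 1 - ‖z‖^2 := uD_pos hz
  have hpa : 0 < 1 - ‖a‖^2 := uD_pos ha
  unfold zygS
  rw [ftest_deriv2 ha hz]
  -- compute the norm
  have hnorm : ‖(((1 - ‖a‖^2 : ℝ)) : ℂ)^2 *
      ((α:ℂ) * ((α:ℂ)+1) * ((starRingEnd ℂ) a)^2 * (bfun a z) ^ (-(α:ℂ)-2))‖
      = (1 - ‖a‖^2)^2 * (α * (α+1) * (‖a‖^2 * ‖bfun a z‖ ^ (-α-2))) := by
    rw [cast_neg_alpha2, norm_mul, norm_mul, norm_mul, norm_mul, norm_pow, norm_pow,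
      Complex.norm_real, RCLike.norm_conj, norm_cpow_real _ (bfun_ne ha1 hz1),
      Real.norm_of_nonneg hpa.le]
    have h1 : ‖(α:ℂ)‖ = α := by rw [Complex.norm_real, Real.norm_of_nonneg hα0.le]
    have h2 : ‖(α:ℂ)+1‖ = α+1 := by
      rw [show (α:ℂ)+1 = (((α+1:ℝ)):ℂ) by push_cast; ring, Complex.norm_real,
        Real.norm_of_nonneg (by linarith)]
    rw [h1, h2]
    ring
  rw [hnorm]
  -- estimates
  have e1 : (1 - ‖z‖^2)^α ≤ (2*‖bfun a z‖)^α :=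
    Real.rpow_le_rpow hpz.le (bfun_ge_z ha1 hz1) hα0.le
  have e2 : (1 - ‖a‖^2)^(2:ℕ) ≤ (2*‖bfun a z‖)^(2:ℕ) :=
    pow_le_pow_left₀ hpa.le (bfun_ge_a ha1 hz1) 2
  have e3 : ‖a‖^2 ≤ 1 := by nlinarith [norm_nonneg a]
  have key : (2*‖bfun a z‖)^α * ((2*‖bfun a z‖)^(2:ℕ) * ‖bfun a z‖ ^ (-α-2)) = 2^α * 4 := by
    rw [Real.mul_rpow zero_le_two hbpos.le]
    have h4 : (2*‖bfun a z‖)^(2:ℕ) = 4 * ‖bfun a z‖^(2:ℕ) := by ring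
    rw [h4]
    have h5 : ‖bfun a z‖^(2:ℕ) = ‖bfun a z‖^((2:ℕ):ℝ) := (Real.rpow_natCast _ 2).symm
    rw [h5]
    have h6 : ‖bfun a z‖ ^ α * ‖bfun a z‖^((2:ℕ):ℝ) * ‖bfun a z‖ ^ (-α-2) = 1 := by
      rw [← Real.rpow_add hbpos, ← Real.rpow_add hbpos]
      norm_num
    calc 2 ^ α * ‖bfun a z‖ ^ α * (4 * ‖bfun a z‖^((2:ℕ):ℝ) * ‖bfun a z‖ ^ (-α-2)) =
        2^α * 4 * (‖bfun a z‖ ^ α * ‖bfun a z‖^((2:ℕ):ℝ) * ‖bfun a z‖ ^ (-α-2)) := by ring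
      _ = 2^α * 4 := by rw [h6]; ring
  have h2a : (2:ℝ)^α ≤ 4 := by
    have := Real.rpow_le_rpow_of_exponent_le one_le_two hα2.le
    rwa [show ((2:ℝ)^(2:ℝ) = 4) by rw [show (2:ℝ) = ((2:ℕ):ℝ) by norm_num, Real.rpow_natCast]; norm_num] at this
  have hbig : (1 - ‖z‖^2)^α * ((1 - ‖a‖^2)^2 * (α * (α+1) * (‖a‖^2 * ‖bfun a z‖ ^ (-α-2))))
      ≤ (2*‖bfun a z‖)^α * ((2*‖bfun a z‖)^(2:ℕ) * (α * (α+1) * (1 * ‖bfun a z‖ ^ (-α-2)))) := by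
    have p1 : (0:ℝ) ≤ ‖bfun a z‖ ^ (-α-2) := Real.rpow_nonneg hbpos.le _
    have p2 : (0:ℝ) ≤ α * (α+1) := by nlinarith
    have p3 : (0:ℝ) ≤ (1 - ‖z‖^2)^α := Real.rpow_nonneg hpz.le _
    have p4 : (0:ℝ) ≤ (2*‖bfun a z‖)^α := Real.rpow_nonneg (by positivity) _
    have p5 : (0:ℝ) ≤ (1 - ‖a‖^2)^(2:ℕ) := by positivity
    have e2' := e2
    have e3' := e3
    have hinner : (1 - ‖a‖^2)^2 * (α * (α+1) * (‖a‖^2 * ‖bfun a z‖ ^ (-α-2)))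
        ≤ (2*‖bfun a z‖)^(2:ℕ) * (α * (α+1) * (1 * ‖bfun a z‖ ^ (-α-2))) := by
      have q1 : α * (α+1) * (‖a‖^2 * ‖bfun a z‖ ^ (-α-2))
          ≤ α * (α+1) * (1 * ‖bfun a z‖ ^ (-α-2)) := by
        apply mul_le_mul_of_nonneg_left _ p2
        apply mul_le_mul_of_nonneg_right e3 p1
      calc (1 - ‖a‖^2)^2 * (α * (α+1) * (‖a‖^2 * ‖bfun a z‖ ^ (-α-2)))
          ≤ (1 - ‖a‖^2)^2 * (α * (α+1) * (1 * ‖bfun a z‖ ^ (-α-2))) := by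
            apply mul_le_mul_of_nonneg_left q1 (by positivity)
        _ ≤ (2*‖bfun a z‖)^(2:ℕ) * (α * (α+1) * (1 * ‖bfun a z‖ ^ (-α-2))) := by
            apply mul_le_mul_of_nonneg_right _ (by positivity)
            exact_mod_cast e2
    calc (1 - ‖z‖^2)^α * ((1 - ‖a‖^2)^2 * (α * (α+1) * (‖a‖^2 * ‖bfun a z‖ ^ (-α-2))))
        ≤ (2*‖bfun a z‖)^α * ((1 - ‖a‖^2)^2 * (α * (α+1) * (‖a‖^2 * ‖bfun a z‖ ^ (-α-2)))) := by
          apply mul_le_mul_of_nonneg_right e1 (by positivity)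
      _ ≤ _ := by apply mul_le_mul_of_nonneg_left hinner p4
  refine le_trans hbig ?_
  have : (2*‖bfun a z‖)^α * ((2*‖bfun a z‖)^(2:ℕ) * (α * (α+1) * (1 * ‖bfun a z‖ ^ (-α-2))))
      = (2^α * 4) * (α * (α+1)) := by
    rw [← key]; ring
  rw [this]
  nlinarith [mul_nonneg (sub_nonneg.mpr h2a) (mul_nonneg hα0.le (by linarith : (0:ℝ) ≤ α+1))]

lemma bfun_self (a : ℂ) : bfun a a = ((1 - ‖a‖^2 : ℝ) : ℂ) := by
  unfold bfun
  rw [mul_comm, Complex.mul_conj, Complex.normSq_eq_norm_sq]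
  push_cast
  ring

lemma norm_ofReal_cpow {x : ℝ} (hx : 0 < x) (s : ℝ) : ‖((x:ℝ):ℂ) ^ ((s:ℝ):ℂ)‖ = x ^ s := by
  rw [Complex.norm_cpow_eq_rpow_re_of_pos hx]
  simp

lemma ftest_val_self {α : ℝ} (hα2 : α < 2) {a : ℂ} (ha : a ∈ uD) : ‖ftest α a a‖ ≤ 1 := by
  have hpa : 0 < 1 - ‖a‖^2 := uD_pos ha
  unfold ftest
  rw [bfun_self, cast_neg_alpha, norm_mul, norm_pow, Complex.norm_real,
    Real.norm_of_nonneg hpa.le, norm_ofReal_cpow hpa]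
  have h1 : (1 - ‖a‖^2)^(2:ℕ) = (1 - ‖a‖^2)^((2:ℕ):ℝ) := (Real.rpow_natCast _ 2).symm
  rw [h1, ← Real.rpow_add hpa]
  apply Real.rpow_le_one hpa.le (by nlinarith [norm_nonneg a]) (by push_cast; linarith)

lemma ftest_deriv_self {α : ℝ} {a : ℂ} (ha : a ∈ uD) :
    ‖deriv (ftest α a) a‖ = α * ‖a‖ * (1 - ‖a‖^2)^(1-α) ∨
    ‖deriv (ftest α a) a‖ = |α| * ‖a‖ * (1 - ‖a‖^2)^(1-α) := by
  exact Or.inr (by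
    have hpa : 0 < 1 - ‖a‖^2 := uD_pos ha
    rw [ftest_deriv ha ha, bfun_self, cast_neg_alpha1, norm_mul, norm_mul, norm_mul,
      norm_pow, Complex.norm_real, Real.norm_of_nonneg hpa.le,
      norm_ofReal_cpow hpa, RCLike.norm_conj, Complex.norm_real, Real.norm_eq_abs]
    have h1 : (1 - ‖a‖^2)^(2:ℕ) = (1 - ‖a‖^2)^((2:ℕ):ℝ) := (Real.rpow_natCast _ 2).symm
    rw [h1]
    have h2 : (1 - ‖a‖^2)^((2:ℕ):ℝ) * (|α| * ‖a‖ * (1 - ‖a‖^2)^(-α-1))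
        = |α| * ‖a‖ * (1 - ‖a‖^2)^(1-α) := by
      rw [show (1-α) = ((2:ℕ):ℝ) + (-α-1) by push_cast; ring, Real.rpow_add hpa]
      ring
    rw [← h2]
    all_goals ring)

lemma ftest_deriv_self' {α : ℝ} (hα0 : 0 < α) {a : ℂ} (ha : a ∈ uD) :
    ‖deriv (ftest α a) a‖ = α * ‖a‖ * (1 - ‖a‖^2)^(1-α) := by
  rcases ftest_deriv_self (α := α) ha with h | h
  · exact h
  · rwa [abs_of_pos hα0] at h

lemma ftest_zNorm {α : ℝ} (hα1 : 1 < α) (hα2 : α < 2) {a : ℂ} (ha : a ∈ uD) :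
    zNorm α (ftest α a) ≤ 1 + α + 16 * (α * (α+1)) := by
  have hpa : 0 < 1 - ‖a‖^2 := uD_pos ha
  have hα0 : (0:ℝ) < α := by linarith
  have hb0 : bfun a 0 = 1 := by simp [bfun]
  have h0 : ‖ftest α a 0‖ ≤ 1 := by
    unfold ftest
    rw [hb0, Complex.one_cpow, mul_one, norm_pow, Complex.norm_real,
      Real.norm_of_nonneg hpa.le]
    nlinarith [norm_nonneg a]
  have h1 : ‖deriv (ftest α a) 0‖ ≤ α := by
    rw [ftest_deriv ha zero_mem_uD, hb0, Complex.one_cpow, mul_one, norm_mul, norm_mul,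
      norm_pow, Complex.norm_real, Real.norm_of_nonneg hpa.le,
      RCLike.norm_conj, Complex.norm_real, Real.norm_of_nonneg hα0.le]
    have ha1 : ‖a‖ ≤ 1 := (mem_uD.mp ha).le
    have k1 : (1-‖a‖^2)^2 ≤ 1 := by nlinarith [norm_nonneg a]
    have k2 : α * ‖a‖ ≤ α := by nlinarith
    have k3 : 0 ≤ α * ‖a‖ := mul_nonneg hα0.le (norm_nonneg a)
    nlinarith [mul_nonneg (sub_nonneg.mpr k1) k3]
  have h2 : sSup (zygS α (ftest α a) '' uD) ≤ 16 * (α * (α+1)) := by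
    apply Real.sSup_le
    · rintro x ⟨z, hz, rfl⟩
      exact ftest_zygS hα1 hα2 ha hz
    · nlinarith
  unfold zNorm
  linarith

lemma memZ_ftest {α : ℝ} (hα1 : 1 < α) (hα2 : α < 2) {a : ℂ} (ha : a ∈ uD) :
    memZ α (ftest α a) :=
  ⟨(ftest_analytic ha).analyticOn, ⟨16 * (α * (α+1)), fun z hz => ftest_zygS hα1 hα2 ha hz⟩⟩

lemma zygS_le_sSup {b : ℝ} {f : ℂ → ℂ} (hf : ∃ M : ℝ, ∀ z ∈ uD, zygS b f z ≤ M) {z : ℂ}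
    (hz : z ∈ uD) : zygS b f z ≤ sSup (zygS b f '' uD) := by
  obtain ⟨M, hM⟩ := hf
  apply le_csSup ⟨M, ?_⟩ (Set.mem_image_of_mem _ hz)
  rintro x ⟨w, hw, rfl⟩
  exact hM w hw

lemma sSup_le_zNorm {b : ℝ} (f : ℂ → ℂ) : sSup (zygS b f '' uD) ≤ zNorm b f := by
  unfold zNorm
  have := norm_nonneg (f 0)
  have := norm_nonneg (deriv f 0)
  linarith

lemma memZ_const : ∀ {b : ℝ}, memZ b (fun _ : ℂ => (1:ℂ)) := by
  intro b
  refine ⟨(analyticOnNhd_const).analyticOn, ⟨0, fun z hz => ?_⟩⟩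
  unfold zygS
  simp

lemma memZ_id : ∀ {b : ℝ}, memZ b (fun z : ℂ => z) := by
  intro b
  refine ⟨(analyticOnNhd_id).analyticOn, ⟨0, fun z hz => ?_⟩⟩
  unfold zygS
  rw [deriv_id'']
  simp

lemma forward_W {β : ℝ} {φ g : ℂ → ℂ} (hφ' : AnalyticOnNhd ℂ φ uD)
    (hφm : Set.MapsTo φ uD uD) (hg' : AnalyticOnNhd ℂ g uD) {M1 : ℝ}
    (hM1 : ∀ z ∈ uD, zygS β (CphiUg g φ (fun _ => (1:ℂ))) z ≤ M1) :
    ∀ z ∈ uD, (1 - ‖z‖^2)^β *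
      ‖deriv g (φ z) * deriv (deriv φ) z + deriv (deriv g) (φ z) * (deriv φ z)^2‖ ≤ M1 := by
  intro z hz
  have h2 := (T_analytic (f := fun _ => (1:ℂ)) hφ' hφm hg' analyticOnNhd_const).2.2 z hz
  simp only [deriv_const', zero_mul, one_mul, zero_add] at h2
  have h3 := hM1 z hz
  unfold zygS at h3
  rw [h2] at h3
  exact h3

lemma forward_A {β : ℝ} {φ g : ℂ → ℂ} (hφ' : AnalyticOnNhd ℂ φ uD)
    (hφm : Set.MapsTo φ uD uD) (hg' : AnalyticOnNhd ℂ g uD) {M1 M2' : ℝ}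
    (hM2' : ∀ z ∈ uD, zygS β (CphiUg g φ (fun z => z)) z ≤ M2')
    (hW1 : ∀ z ∈ uD, (1 - ‖z‖^2)^β *
      ‖deriv g (φ z) * deriv (deriv φ) z + deriv (deriv g) (φ z) * (deriv φ z)^2‖ ≤ M1) :
    ∀ z ∈ uD, (1 - ‖z‖^2)^β * ‖deriv g (φ z) * (deriv φ z)^2‖ ≤ M2' + M1 := by
  intro z hz
  have h2 := (T_analytic (f := fun z => z) hφ' hφm hg' analyticOnNhd_id).2.2 z hz
  simp only [deriv_id'', one_mul] at h2
  have h3 := hM2' z hz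
  unfold zygS at h3
  rw [h2] at h3
  set Az := deriv g (φ z) * (deriv φ z)^2 with hAz
  set Wz := deriv g (φ z) * deriv (deriv φ) z + deriv (deriv g) (φ z) * (deriv φ z)^2 with hWz
  have hle : ‖Az‖ ≤ ‖Az + φ z * Wz‖ + ‖φ z * Wz‖ := by
    have h4 := norm_sub_le (Az + φ z * Wz) (φ z * Wz)
    simpa using h4
  have hP : (0:ℝ) ≤ (1 - ‖z‖^2)^β := Real.rpow_nonneg (uD_pos hz).le _
  have hφz : ‖φ z‖ ≤ 1 := (mem_uD.mp (hφm hz)).le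
  have hWn : ‖φ z * Wz‖ ≤ ‖Wz‖ := by
    rw [norm_mul]; nlinarith [norm_nonneg Wz]
  have s1 := mul_le_mul_of_nonneg_left hle hP
  have s2 := mul_le_mul_of_nonneg_left hWn hP
  have s3 := hW1 z hz
  nlinarith [s1, s2, s3, h3]

lemma zNorm_nonneg {b : ℝ} {f : ℂ → ℂ} (hf : ∃ M : ℝ, ∀ z ∈ uD, zygS b f z ≤ M) :
    0 ≤ zNorm b f := by
  have h := le_trans (zygS_nonneg zero_mem_uD) (zygS_le_sSup hf zero_mem_uD)
  unfold zNorm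
  have h1 := norm_nonneg (f 0)
  have h2 := norm_nonneg (deriv f 0)
  linarith


set_option maxHeartbeats 1000000 in
theorem stmt_8 (α β : ℝ) (hα1 : 1 < α) (hα2 : α < 2) (hβ : 0 < β)
    (φ g : ℂ → ℂ) (hφ : AnalyticOn ℂ φ uD) (hφm : Set.MapsTo φ uD uD)
    (hg : AnalyticOn ℂ g uD) :
    boundedOp α β (CphiUg g φ) ↔
      (memHv β (fun z => deriv g (φ z) * deriv (deriv φ) z + deriv (deriv g) (φ z) * (deriv φ z) ^ 2) ∧ (∃ M : ℝ, ∀ z ∈ uD, (1 - ‖z‖ ^ 2) ^ β * ‖deriv g (φ z) * (deriv φ z) ^ 2‖ / (1 - ‖φ z‖ ^ 2) ^ (α - 1) ≤ M)) := by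
  have hφ' : AnalyticOnNhd ℂ φ uD := analyticOnNhd_of φ hφ
  have hg' : AnalyticOnNhd ℂ g uD := analyticOnNhd_of g hg
  have hα0 : (0:ℝ) < α := by linarith
  have h2α : (0:ℝ) < 2 - α := by linarith
  have hc1n : (0:ℝ) ≤ 2/(α-1) := div_nonneg (by norm_num) (by linarith)
  have hc2n : (0:ℝ) ≤ 1 + (1+2/(α-1))/(2-α) := by
    have := div_nonneg (by linarith : (0:ℝ) ≤ 1+2/(α-1)) h2α.le
    linarith
  constructor
  · rintro ⟨hmap, C, hC0, hCle⟩
    obtain ⟨-, M1, hM1⟩ := hmap _ (memZ_const (b := α))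
    have hW1 := forward_W hφ' hφm hg' hM1
    have hM10 : 0 ≤ M1 :=
      le_trans (mul_nonneg (Real.rpow_nonneg (uD_pos zero_mem_uD).le _) (norm_nonneg _))
        (hW1 0 zero_mem_uD)
    refine ⟨⟨M1, hW1⟩, ?_⟩
    obtain ⟨-, M2', hM2'⟩ := hmap _ (memZ_id (b := α))
    have hM2'0 : 0 ≤ M2' := le_trans (zygS_nonneg zero_mem_uD) (hM2' 0 zero_mem_uD)
    have hA1 := forward_A hφ' hφm hg' hM2' hW1
    have hKt0 : 0 ≤ 1 + α + 16 * (α * (α+1)) := by nlinarith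
    refine ⟨max ((2/α) * (C * (1 + α + 16 * (α * (α+1))) + M1))
      ((M2' + M1) * (3/4:ℝ)^(1-α)), ?_⟩
    intro z hz
    have haD : φ z ∈ uD := hφm hz
    have hapos : 0 < 1 - ‖φ z‖^2 := uD_pos haD
    have hX0 : 0 ≤ (1 - ‖z‖^2)^β * ‖deriv g (φ z) * (deriv φ z)^2‖ :=
      mul_nonneg (Real.rpow_nonneg (uD_pos hz).le _) (norm_nonneg _)
    have hQ0 : 0 ≤ (1 - ‖φ z‖^2)^(1-α) := Real.rpow_nonneg hapos.le _
    have hgoal_eq : (1 - ‖z‖^2)^β * ‖deriv g (φ z) * (deriv φ z)^2‖ / (1 - ‖φ z‖^2)^(α-1)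
        = ((1 - ‖z‖^2)^β * ‖deriv g (φ z) * (deriv φ z)^2‖) * (1 - ‖φ z‖^2)^(1-α) := by
      rw [div_eq_mul_inv, ← Real.rpow_neg hapos.le, show -(α-1) = 1-α by ring]
    rw [hgoal_eq]
    rcases le_or_gt (1/2 : ℝ) ‖φ z‖ with hge | hlt
    · refine le_trans ?_ (le_max_left _ _)
      have hfz := memZ_ftest hα1 hα2 haD
      have hTfz := hmap _ hfz
      have hzy : zygS β (CphiUg g φ (ftest α (φ z))) z ≤ C * (1 + α + 16 * (α * (α+1))) := by
        calc zygS β (CphiUg g φ (ftest α (φ z))) z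
            ≤ sSup (zygS β (CphiUg g φ (ftest α (φ z))) '' uD) := zygS_le_sSup hTfz.2 hz
          _ ≤ zNorm β (CphiUg g φ (ftest α (φ z))) := sSup_le_zNorm _
          _ ≤ C * zNorm α (ftest α (φ z)) := hCle _ hfz
          _ ≤ C * (1 + α + 16 * (α * (α+1))) :=
              mul_le_mul_of_nonneg_left (ftest_zNorm hα1 hα2 haD) hC0.le
      have h2 := (T_analytic (f := ftest α (φ z)) hφ' hφm hg' (ftest_analytic haD)).2.2 z hz
      have h3 : zygS β (CphiUg g φ (ftest α (φ z))) z = (1 - ‖z‖^2)^β *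
          ‖deriv (ftest α (φ z)) (φ z) * (deriv g (φ z) * (deriv φ z)^2)
            + ftest α (φ z) (φ z) * (deriv g (φ z) * deriv (deriv φ) z
              + deriv (deriv g) (φ z) * (deriv φ z)^2)‖ := by
        unfold zygS
        rw [h2]
      have hle : ‖deriv (ftest α (φ z)) (φ z) * (deriv g (φ z) * (deriv φ z)^2)‖
          ≤ ‖deriv (ftest α (φ z)) (φ z) * (deriv g (φ z) * (deriv φ z)^2)
              + ftest α (φ z) (φ z) * (deriv g (φ z) * deriv (deriv φ) z
               + deriv (deriv g) (φ z) * (deriv φ z)^2)‖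
            + ‖ftest α (φ z) (φ z) * (deriv g (φ z) * deriv (deriv φ) z
               + deriv (deriv g) (φ z) * (deriv φ z)^2)‖ := by
        have h4 := norm_sub_le (deriv (ftest α (φ z)) (φ z) * (deriv g (φ z) * (deriv φ z)^2)
            + ftest α (φ z) (φ z) * (deriv g (φ z) * deriv (deriv φ) z
               + deriv (deriv g) (φ z) * (deriv φ z)^2))
          (ftest α (φ z) (φ z) * (deriv g (φ z) * deriv (deriv φ) z
               + deriv (deriv g) (φ z) * (deriv φ z)^2))
        simpa using h4
      have hP : (0:ℝ) ≤ (1 - ‖z‖^2)^β := Real.rpow_nonneg (uD_pos hz).le _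
      have hv1 : ‖ftest α (φ z) (φ z)‖ ≤ 1 := ftest_val_self hα2 haD
      have hWb := hW1 z hz
      have hvW : ‖ftest α (φ z) (φ z) * (deriv g (φ z) * deriv (deriv φ) z
            + deriv (deriv g) (φ z) * (deriv φ z)^2)‖
          ≤ ‖deriv g (φ z) * deriv (deriv φ) z + deriv (deriv g) (φ z) * (deriv φ z)^2‖ := by
        rw [norm_mul]
        nlinarith [norm_nonneg (deriv g (φ z) * deriv (deriv φ) z
          + deriv (deriv g) (φ z) * (deriv φ z)^2)]
      have key1 : ‖deriv (ftest α (φ z)) (φ z)‖ *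
          ((1 - ‖z‖^2)^β * ‖deriv g (φ z) * (deriv φ z)^2‖)
          ≤ C * (1 + α + 16 * (α * (α+1))) + M1 := by
        have s1 := mul_le_mul_of_nonneg_left hle hP
        have s2 := mul_le_mul_of_nonneg_left hvW hP
        rw [mul_add] at s1
        rw [← h3] at s1
        have s4 : (1 - ‖z‖^2)^β *
            ‖deriv (ftest α (φ z)) (φ z) * (deriv g (φ z) * (deriv φ z)^2)‖
            = ‖deriv (ftest α (φ z)) (φ z)‖ *
              ((1 - ‖z‖^2)^β * ‖deriv g (φ z) * (deriv φ z)^2‖) := by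
          rw [norm_mul]; ring
        rw [s4] at s1
        nlinarith [s1, s2, hzy, hWb]
      have hdval := ftest_deriv_self' hα0 haD
      have hdge : (α/2) * (1 - ‖φ z‖^2)^(1-α) ≤ ‖deriv (ftest α (φ z)) (φ z)‖ := by
        rw [hdval]
        nlinarith [mul_nonneg (mul_nonneg hα0.le (sub_nonneg.mpr hge)) hQ0]
      have key2 : (1 - ‖φ z‖^2)^(1-α) *
          ((1 - ‖z‖^2)^β * ‖deriv g (φ z) * (deriv φ z)^2‖) * (α/2)
          ≤ C * (1 + α + 16 * (α * (α+1))) + M1 := by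
        calc (1 - ‖φ z‖^2)^(1-α) *
            ((1 - ‖z‖^2)^β * ‖deriv g (φ z) * (deriv φ z)^2‖) * (α/2)
            = ((α/2) * (1 - ‖φ z‖^2)^(1-α)) *
              ((1 - ‖z‖^2)^β * ‖deriv g (φ z) * (deriv φ z)^2‖) := by ring
          _ ≤ ‖deriv (ftest α (φ z)) (φ z)‖ *
              ((1 - ‖z‖^2)^β * ‖deriv g (φ z) * (deriv φ z)^2‖) :=
              mul_le_mul_of_nonneg_right hdge hX0
          _ ≤ C * (1 + α + 16 * (α * (α+1))) + M1 := key1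
      have hhalf : (0:ℝ) < α/2 := by positivity
      rw [show ((1 - ‖z‖^2)^β * ‖deriv g (φ z) * (deriv φ z)^2‖) * (1 - ‖φ z‖^2)^(1-α)
        = (1 - ‖φ z‖^2)^(1-α) * ((1 - ‖z‖^2)^β * ‖deriv g (φ z) * (deriv φ z)^2‖) by ring]
      rw [show (2/α) * (C * (1 + α + 16 * (α * (α+1))) + M1)
        = (C * (1 + α + 16 * (α * (α+1))) + M1) / (α/2) by field_simp]
      rw [le_div_iff₀ hhalf]
      exact key2
    · refine le_trans ?_ (le_max_right _ _)
      have hXb := hA1 z hz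
      have hQb : (1 - ‖φ z‖^2)^(1-α) ≤ (3/4:ℝ)^(1-α) := by
        apply Real.rpow_le_rpow_of_nonpos (by norm_num)
          (by nlinarith [norm_nonneg (φ z)]) (by linarith)
      calc ((1 - ‖z‖^2)^β * ‖deriv g (φ z) * (deriv φ z)^2‖) * (1 - ‖φ z‖^2)^(1-α)
          ≤ (M2' + M1) * (1 - ‖φ z‖^2)^(1-α) := mul_le_mul_of_nonneg_right hXb hQ0
        _ ≤ (M2' + M1) * (3/4:ℝ)^(1-α) := mul_le_mul_of_nonneg_left hQb (by linarith)
  · rintro ⟨⟨M1, hM1⟩, ⟨M2, hM2⟩⟩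
    have hM1' : ∀ z ∈ uD, (1 - ‖z‖^2)^β * ‖deriv g (φ z) * deriv (deriv φ) z
        + deriv (deriv g) (φ z) * (deriv φ z)^2‖ ≤ M1 := hM1
    have hM10 : 0 ≤ M1 :=
      le_trans (mul_nonneg (Real.rpow_nonneg (uD_pos zero_mem_uD).le _) (norm_nonneg _))
        (hM1' 0 zero_mem_uD)
    have hM20 : 0 ≤ M2 := by
      refine le_trans ?_ (hM2 0 zero_mem_uD)
      apply div_nonneg
        (mul_nonneg (Real.rpow_nonneg (uD_pos zero_mem_uD).le _) (norm_nonneg _))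
        (Real.rpow_nonneg (uD_pos (hφm zero_mem_uD)).le _)
    have hφ0 : φ 0 ∈ uD := hφm zero_mem_uD
    have hsub0 : closedBall (0:ℂ) ‖φ 0‖ ⊆ uD := by
      intro u hu
      rw [mem_uD]
      calc ‖u‖ ≤ ‖φ 0‖ := by simpa [dist_zero_right] using hu
        _ < 1 := mem_uD.mp hφ0
    obtain ⟨Kg, hKg⟩ := (isCompact_closedBall (0:ℂ) ‖φ 0‖).exists_bound_of_continuousOn
      ((hg'.deriv.continuousOn).mono hsub0)
    have hKg0 : 0 ≤ Kg := le_trans (norm_nonneg _) (hKg 0 (by simp))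
    have master : ∃ C0 : ℝ, 0 ≤ C0 ∧ ∀ f, memZ α f → (memZ β (CphiUg g φ f) ∧
        zNorm β (CphiUg g φ f) ≤ C0 * zNorm α f) := by
      refine ⟨(1 + (1+2/(α-1))/(2-α)) * Kg * (1 + ‖deriv φ 0‖)
        + ((1+2/(α-1))*M2 + (1 + (1+2/(α-1))/(2-α))*M1), ?_, ?_⟩
      · have n1 : (0:ℝ) ≤ (1 + (1+2/(α-1))/(2-α)) * Kg * (1 + ‖deriv φ 0‖) :=
          mul_nonneg (mul_nonneg hc2n hKg0) (by positivity)
        have n2 : (0:ℝ) ≤ (1+2/(α-1))*M2 := mul_nonneg (by linarith) hM20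
        have n3 : (0:ℝ) ≤ (1 + (1+2/(α-1))/(2-α))*M1 := mul_nonneg hc2n hM10
        linarith
      intro f hf
      have hfa : AnalyticOnNhd ℂ f uD := analyticOnNhd_of f hf.1
      have hT := T_analytic (f := f) hφ' hφm hg' hfa
      have hSb : ∀ z ∈ uD, zygS α f z ≤ sSup (zygS α f '' uD) :=
        fun z hz => zygS_le_sSup hf.2 hz
      have hS0 : 0 ≤ sSup (zygS α f '' uD) :=
        le_trans (zygS_nonneg zero_mem_uD) (hSb 0 zero_mem_uD)
      have hN : zNorm α f = ‖f 0‖ + ‖deriv f 0‖ + sSup (zygS α f '' uD) := rfl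
      have hN0 : 0 ≤ zNorm α f := zNorm_nonneg hf.2
      have hf0N : ‖f 0‖ ≤ zNorm α f := by
        rw [hN]; linarith [norm_nonneg (deriv f 0), hS0]
      have hf1N : ‖deriv f 0‖ ≤ zNorm α f := by
        rw [hN]; linarith [norm_nonneg (f 0), hS0]
      have hSN : sSup (zygS α f '' uD) ≤ zNorm α f := by
        rw [hN]; linarith [norm_nonneg (f 0), norm_nonneg (deriv f 0)]
      -- growth bounds
      have hDer : ∀ w ∈ uD, ‖deriv f w‖ ≤ (1+2/(α-1)) * zNorm α f * (1-‖w‖^2)^(1-α) := by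
        intro w hw
        refine le_trans (deriv_growth hα1 hα2 hfa hSb hw) ?_
        apply mul_le_mul_of_nonneg_right _ (Real.rpow_nonneg (uD_pos hw).le _)
        have := mul_le_mul_of_nonneg_left hSN hc1n
        nlinarith [hf1N]
      have hVal : ∀ w ∈ uD, ‖f w‖ ≤ (1 + (1+2/(α-1))/(2-α)) * zNorm α f := by
        intro w hw
        refine le_trans (value_growth hα1 hα2 hfa hSb hw) ?_
        have hnum : ‖deriv f 0‖ + 2/(α-1) * sSup (zygS α f '' uD)
            ≤ (1+2/(α-1)) * zNorm α f := by
          have := mul_le_mul_of_nonneg_left hSN hc1n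
          nlinarith [hf1N]
        have hdiv : (‖deriv f 0‖ + 2/(α-1) * sSup (zygS α f '' uD))/(2-α)
            ≤ ((1+2/(α-1)) * zNorm α f)/(2-α) := by gcongr
        have he : ((1+2/(α-1)) * zNorm α f)/(2-α) = (1+2/(α-1))/(2-α) * zNorm α f := by
          ring
        nlinarith [hf0N, hdiv, he ▸ hdiv]
      -- pointwise Zygmund bound for T f
      have hzy : ∀ z ∈ uD, zygS β (CphiUg g φ f) z ≤
          ((1+2/(α-1))*M2 + (1 + (1+2/(α-1))/(2-α))*M1) * zNorm α f := by
        intro z hz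
        have haD : φ z ∈ uD := hφm hz
        have hpa : 0 < 1 - ‖φ z‖^2 := uD_pos haD
        have hP : (0:ℝ) ≤ (1 - ‖z‖^2)^β := Real.rpow_nonneg (uD_pos hz).le _
        have h2 := hT.2.2 z hz
        unfold zygS
        rw [h2]
        have hQY : (1-‖φ z‖^2)^(1-α) * (1-‖φ z‖^2)^(α-1) = 1 := by
          rw [← Real.rpow_add hpa]; norm_num
        have hAb : (1 - ‖z‖^2)^β * ‖deriv g (φ z) * (deriv φ z)^2‖
            ≤ M2 * (1-‖φ z‖^2)^(α-1) := by
          have h := hM2 z hz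
          rwa [div_le_iff₀ (Real.rpow_pos_of_pos hpa _)] at h
        have hfd := hDer (φ z) haD
        have hfv := hVal (φ z) haD
        have hWb := hM1' z hz
        have s1 : ‖deriv f (φ z)‖ * ((1 - ‖z‖^2)^β * ‖deriv g (φ z) * (deriv φ z)^2‖)
            ≤ ((1+2/(α-1)) * zNorm α f * (1-‖φ z‖^2)^(1-α)) * (M2 * (1-‖φ z‖^2)^(α-1)) := by
          apply mul_le_mul hfd hAb
            (mul_nonneg hP (norm_nonneg _))
            (mul_nonneg (mul_nonneg (by linarith) hN0) (Real.rpow_nonneg hpa.le _))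
        have s1' : ((1+2/(α-1)) * zNorm α f * (1-‖φ z‖^2)^(1-α)) * (M2 * (1-‖φ z‖^2)^(α-1))
            = (1+2/(α-1)) * M2 * zNorm α f := by
          have : ((1+2/(α-1)) * zNorm α f * (1-‖φ z‖^2)^(1-α)) * (M2 * (1-‖φ z‖^2)^(α-1))
              = (1+2/(α-1)) * M2 * zNorm α f
                * ((1-‖φ z‖^2)^(1-α) * (1-‖φ z‖^2)^(α-1)) := by ring
          rw [this, hQY, mul_one]
        have s2 : ‖f (φ z)‖ * ((1 - ‖z‖^2)^β *
            ‖deriv g (φ z) * deriv (deriv φ) z + deriv (deriv g) (φ z) * (deriv φ z)^2‖)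
            ≤ ((1 + (1+2/(α-1))/(2-α)) * zNorm α f) * M1 := by
          apply mul_le_mul hfv hWb
            (mul_nonneg hP (norm_nonneg _))
            (mul_nonneg hc2n hN0)
        have t1 : ‖deriv f (φ z) * (deriv g (φ z) * (deriv φ z)^2)
            + f (φ z) * (deriv g (φ z) * deriv (deriv φ) z
              + deriv (deriv g) (φ z) * (deriv φ z)^2)‖
            ≤ ‖deriv f (φ z)‖ * ‖deriv g (φ z) * (deriv φ z)^2‖
              + ‖f (φ z)‖ * ‖deriv g (φ z) * deriv (deriv φ) z
                + deriv (deriv g) (φ z) * (deriv φ z)^2‖ := by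
          have t0 := norm_add_le (deriv f (φ z) * (deriv g (φ z) * (deriv φ z)^2))
            (f (φ z) * (deriv g (φ z) * deriv (deriv φ) z
              + deriv (deriv g) (φ z) * (deriv φ z)^2))
          rw [norm_mul (deriv f (φ z)), norm_mul (f (φ z))] at t0
          exact t0

        have t2 := mul_le_mul_of_nonneg_left t1 hP
        nlinarith [s1, s1', s2, t2]
      refine ⟨⟨hT.1.analyticOn, ⟨_, hzy⟩⟩, ?_⟩
      -- norm at 0 and derivative at 0
      have hTf0 : ‖CphiUg g φ f 0‖ ≤ (1 + (1+2/(α-1))/(2-α)) * zNorm α f * Kg := by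
        have hb : ∀ t ∈ Set.uIoc (0:ℝ) 1, ‖φ 0 * (f ((t:ℂ) * φ 0) * deriv g ((t:ℂ) * φ 0))‖
            ≤ (1 + (1+2/(α-1))/(2-α)) * zNorm α f * Kg := by
          intro t ht
          rw [uIoc_of_le zero_le_one] at ht
          have htφ : ((t:ℂ) * φ 0) ∈ uD := smul_mem_uD hφ0 ht.1.le ht.2
          have htc : ((t:ℂ) * φ 0) ∈ closedBall (0:ℂ) ‖φ 0‖ := by
            simp only [mem_closedBall, dist_zero_right, norm_mul, Complex.norm_real,
              Real.norm_of_nonneg ht.1.le]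
            nlinarith [norm_nonneg (φ 0), ht.1.le, ht.2]
          have hf' := hVal _ htφ
          have hg'' := hKg _ htc
          have hφ0n : ‖φ 0‖ ≤ 1 := (mem_uD.mp hφ0).le
          calc ‖φ 0 * (f ((t:ℂ) * φ 0) * deriv g ((t:ℂ) * φ 0))‖
              = ‖φ 0‖ * (‖f ((t:ℂ) * φ 0)‖ * ‖deriv g ((t:ℂ) * φ 0)‖) := by
                rw [norm_mul, norm_mul]
            _ ≤ 1 * (((1 + (1+2/(α-1))/(2-α)) * zNorm α f) * Kg) := by
                apply mul_le_mul hφ0n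
                  (mul_le_mul hf' hg'' (norm_nonneg _) (mul_nonneg hc2n hN0))
                  (mul_nonneg (norm_nonneg _) (norm_nonneg _)) one_pos.le
            _ = (1 + (1+2/(α-1))/(2-α)) * zNorm α f * Kg := by ring
        have h9 := intervalIntegral.norm_integral_le_of_norm_le_const hb
        rw [show |(1:ℝ) - 0| = 1 by norm_num, mul_one] at h9
        exact h9
      have hTf1 : ‖deriv (CphiUg g φ f) 0‖
          ≤ (1 + (1+2/(α-1))/(2-α)) * zNorm α f * Kg * ‖deriv φ 0‖ := by
        rw [hT.2.1 0 zero_mem_uD]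
        have hfv := hVal _ hφ0
        have hg'' := hKg (φ 0) (by simp [mem_closedBall, dist_zero_right])
        rw [norm_mul, norm_mul]
        have : ‖f (φ 0)‖ * ‖deriv g (φ 0)‖ ≤ ((1 + (1+2/(α-1))/(2-α)) * zNorm α f) * Kg :=
          mul_le_mul hfv hg'' (norm_nonneg _) (mul_nonneg hc2n hN0)
        apply mul_le_mul_of_nonneg_right this (norm_nonneg _)
      have hsup : sSup (zygS β (CphiUg g φ f) '' uD)
          ≤ ((1+2/(α-1))*M2 + (1 + (1+2/(α-1))/(2-α))*M1) * zNorm α f := by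
        apply Real.sSup_le
        · rintro x ⟨z, hz, rfl⟩
          exact hzy z hz
        · apply mul_nonneg _ hN0
          have n2 : (0:ℝ) ≤ (1+2/(α-1))*M2 := mul_nonneg (by linarith) hM20
          have n3 : (0:ℝ) ≤ (1 + (1+2/(α-1))/(2-α))*M1 := mul_nonneg hc2n hM10
          linarith
      have hzn : zNorm β (CphiUg g φ f) = ‖CphiUg g φ f 0‖ + ‖deriv (CphiUg g φ f) 0‖
          + sSup (zygS β (CphiUg g φ f) '' uD) := rfl
      rw [hzn]
      have expand : ((1 + (1+2/(α-1))/(2-α)) * Kg * (1 + ‖deriv φ 0‖)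
          + ((1+2/(α-1))*M2 + (1 + (1+2/(α-1))/(2-α))*M1)) * zNorm α f
          = (1 + (1+2/(α-1))/(2-α)) * zNorm α f * Kg
            + (1 + (1+2/(α-1))/(2-α)) * zNorm α f * Kg * ‖deriv φ 0‖
            + ((1+2/(α-1))*M2 + (1 + (1+2/(α-1))/(2-α))*M1) * zNorm α f := by ring
      rw [expand]
      linarith [hTf0, hTf1, hsup]
    obtain ⟨C0, hC00, master⟩ := master
    refine ⟨fun f hf => (master f hf).1, max C0 1,
      lt_of_lt_of_le zero_lt_one (le_max_right _ _), fun f hf => ?_⟩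
    calc zNorm β (CphiUg g φ f) ≤ C0 * zNorm α f := (master f hf).2
      _ ≤ max C0 1 * zNorm α f :=
        mul_le_mul_of_nonneg_right (le_max_left _ _) (zNorm_nonneg hf.2)
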